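/- Let m ≥ 1 be an integer and h a nonzero complex number. In the ring R = ℂ[X]/(X^{m+1}), with x the image of X, each element x + k·h with k ≥ 1 an integer is a unit. Define a_0 = 1 and, for d ≥ 1, a_d = (∏_{k=1}^{d} (x + k·h))^{-(m+1)} ∈ R, and let J = ∑_{d≥0} a_d q^d ∈ R[[q]]. Let D : R[[q]] → R[[q]] be the ℂ-linear operator sending a power series F = ∑_d c_d q^d to ∑_d (x + d·h)·c_d q^d (the operator x + h·q·d/dq). Then D^{m+1} J = q·J; that is, the cohomology-valued hypergeometric series J(t) = ∑_{d≥0} q^{x/h+d}/[(x+h)(x+2h)⋯(x+dh)]^{m+1} solves the quantum differential equation (h q d/dq)^{m+1} J = q J of ℂP^m. -/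

import Mathlib

/-- The cohomology ring `H^*(ℂPᵐ;ℂ) = ℂ[X]/(X^{m+1})`. -/
noncomputable abbrev ProjCohomology (m : ℕ) : Type :=
  Polynomial ℂ ⧸ Ideal.span {(Polynomial.X : Polynomial ℂ) ^ (m + 1)}

/-- The image of `X`, a generator of `H²`. -/
noncomputable abbrev projX (m : ℕ) : ProjCohomology m :=
  Ideal.Quotient.mk _ Polynomial.X

lemma projX_nilpotent (m : ℕ) : (projX m) ^ (m + 1) = 0 := by
  rw [← map_pow, Ideal.Quotient.eq_zero_iff_mem]
  exact Ideal.subset_span rfl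

lemma unit_aux (m : ℕ) (c : ℂ) (hc : c ≠ 0) :
    IsUnit (projX m + algebraMap ℂ (ProjCohomology m) c) := by
  exact IsNilpotent.isUnit_add_right_of_commute ⟨m + 1, projX_nilpotent m⟩
    ((isUnit_iff_ne_zero.mpr hc).map (algebraMap ℂ (ProjCohomology m))) (Commute.all _ _)

theorem stmt_0 (m : ℕ) (hm : 1 ≤ m) (h : ℂ) (hh : h ≠ 0)
    -- the coefficients `a_d = (∏_{k=1}^d (x + k h))^{-(m+1)}` (so that `a_0 = 1`)
    (a : ℕ → ProjCohomology m)
    (ha : ∀ d : ℕ, a d = Ring.inverse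
      ((∏ k ∈ Finset.range d,
        (projX m + algebraMap ℂ (ProjCohomology m) (((k : ℂ) + 1) * h))) ^ (m + 1)))
    -- the operator `D = x + h q d/dq`, acting coefficientwise by `x + d·h`
    (D : PowerSeries (ProjCohomology m) → PowerSeries (ProjCohomology m))
    (hD : ∀ (F : PowerSeries (ProjCohomology m)) (d : ℕ),
      PowerSeries.coeff (R := ProjCohomology m) d (D F)
        = (projX m + algebraMap ℂ (ProjCohomology m) ((d : ℂ) * h))
            * PowerSeries.coeff (R := ProjCohomology m) d F) :
    -- each `x + k·h` with `k ≥ 1` is a unit, and `D^{m+1} J = q J`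
    (∀ k : ℕ, 1 ≤ k →
      IsUnit (projX m + algebraMap ℂ (ProjCohomology m) ((k : ℂ) * h))) ∧
    D^[m + 1] (PowerSeries.mk a) = PowerSeries.X * PowerSeries.mk a := by
  have hunit : ∀ k : ℕ, 1 ≤ k →
      IsUnit (projX m + algebraMap ℂ (ProjCohomology m) ((k : ℂ) * h)) := by
    intro k hk
    refine unit_aux m _ (mul_ne_zero ?_ hh)
    exact_mod_cast Nat.one_le_iff_ne_zero.mp hk
  refine ⟨hunit, ?_⟩
  -- iterated coefficient formula
  have hiter : ∀ (n : ℕ) (F : PowerSeries (ProjCohomology m)) (d : ℕ),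
      PowerSeries.coeff (R := ProjCohomology m) d (D^[n] F)
        = (projX m + algebraMap ℂ (ProjCohomology m) ((d : ℂ) * h)) ^ n
            * PowerSeries.coeff (R := ProjCohomology m) d F := by
    intro n
    induction n with
    | zero => simp
    | succ n ih =>
      intro F d
      rw [Function.iterate_succ_apply', hD, ih]
      ring
  ext d
  rw [hiter]
  cases d with
  | zero =>
    rw [PowerSeries.coeff_zero_X_mul]
    simp only [Nat.cast_zero, zero_mul, map_zero, add_zero, PowerSeries.coeff_mk, ha 0]
    simp [projX_nilpotent m]
  | succ d =>
    rw [PowerSeries.coeff_succ_X_mul, PowerSeries.coeff_mk, PowerSeries.coeff_mk,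
      ha (d + 1), ha d]
    set u : ProjCohomology m := projX m + algebraMap ℂ (ProjCohomology m) (((d : ℂ) + 1) * h)
    have hu : IsUnit u := by
      have := hunit (d + 1) (Nat.le_add_left 1 d)
      simpa [u, Nat.cast_add] using this
    have hP : IsUnit ((∏ k ∈ Finset.range d,
        (projX m + algebraMap ℂ (ProjCohomology m) (((k : ℂ) + 1) * h))) ^ (m + 1)) := by
      refine IsUnit.pow _ (Finset.prod_induction _ IsUnit (fun _ _ => IsUnit.mul) isUnit_one
        fun k _ => ?_)
      have := hunit (k + 1) (Nat.le_add_left 1 k)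
      simpa [Nat.cast_add] using this
    rw [Finset.prod_range_succ, mul_pow, Ring.mul_inverse_rev]
    have : ((d + 1 : ℕ) : ℂ) = (d : ℂ) + 1 := by push_cast; ring
    rw [this]
    rw [← mul_assoc, Ring.mul_inverse_cancel _ (hu.pow _)] ; ring
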